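/- Let I ⊆ (0,∞) be a nonempty open interval, let U ⊆ ℝ^{d} (d ≥ 1) be a connected open set, and let V : I × U → ℝ be twice continuously differentiable. Suppose that for every index A ∈ {1,…,d} and every (r,x) ∈ I × U one has ∂²V/∂r∂x^A (r,x) = (1/r) ∂V/∂x^A (r,x). Then there exist functions β : I → ℝ and Ω : U → ℝ such that V(r,x) = β(r) + r·Ω(x) for all (r,x) ∈ I × U. -/

import Mathlib

/-- A function with zero derivative on an open preconnected set is constant there. -/
lemma kid_aux_const_of_fderiv_zero {E F : Type*} [NormedAddCommGroup E] [NormedSpace ℝ E]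
    [NormedAddCommGroup F] [NormedSpace ℝ F] {f : E → F} {s : Set E}
    (hs : IsOpen s) (hsc : IsPreconnected s)
    (hf : ∀ x ∈ s, HasFDerivAt f (0 : E →L[ℝ] F) x) :
    ∀ x ∈ s, ∀ y ∈ s, f x = f y := by
  have hloc : ∀ z ∈ s, ∃ ε > 0, Metric.ball z ε ⊆ s ∧ ∀ w ∈ Metric.ball z ε, f w = f z := by
    intro z hz
    obtain ⟨ε, hε, hball⟩ := Metric.isOpen_iff.1 hs z hz
    refine ⟨ε, hε, hball, fun w hw => ?_⟩
    refine (convex_ball z ε).is_const_of_fderivWithin_eq_zero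
      (fun p hp => ((hf p (hball hp)).differentiableAt).differentiableWithinAt)
      (fun p hp => ?_) hw (Metric.mem_ball_self hε)
    rw [fderivWithin_of_isOpen Metric.isOpen_ball hp]
    exact (hf p (hball hp)).fderiv
  intro x hx y hy
  set u : Set E := {z | z ∈ s ∧ f z = f x} with hu_def
  set v : Set E := {z | z ∈ s ∧ f z ≠ f x} with hv_def
  have hu : IsOpen u := by
    rw [Metric.isOpen_iff]
    rintro z ⟨hzs, hzf⟩
    obtain ⟨ε, hε, hball, hconst⟩ := hloc z hzs
    exact ⟨ε, hε, fun w hw => ⟨hball hw, (hconst w hw).trans hzf⟩⟩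
  have hv : IsOpen v := by
    rw [Metric.isOpen_iff]
    rintro z ⟨hzs, hzf⟩
    obtain ⟨ε, hε, hball, hconst⟩ := hloc z hzs
    exact ⟨ε, hε, fun w hw => ⟨hball hw, (hconst w hw).symm ▸ hzf⟩⟩
  have hdisj : Disjoint u v := by
    rw [Set.disjoint_left]
    rintro z ⟨_, hz1⟩ ⟨_, hz2⟩
    exact hz2 hz1
  have hcover : s ⊆ u ∪ v := fun z hz => by
    by_cases h : f z = f x
    · exact Or.inl ⟨hz, h⟩
    · exact Or.inr ⟨hz, h⟩
  have := hsc.subset_left_of_subset_union hu hv hdisj hcover ⟨x, hx, hx, rfl⟩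
  exact ((this hx).2).trans ((this hy).2).symm

/-- Separation of variables for the off-diagonal static KID equation
`∂²V/∂r∂x^A = (1/r) ∂V/∂x^A`: any `C²` solution on `I × U`, where `I ⊆ (0,∞)` is a nonempty
open interval and `U ⊆ ℝ^d` is a connected open set, is of the form
`V(r,x) = β(r) + r·Ω(x)`. -/
theorem kid_separation_of_variables (d : ℕ) (hd : 1 ≤ d)
    (I : Set ℝ) (hIopen : IsOpen I) (hIconn : IsPreconnected I) (hIne : I.Nonempty)
    (hIpos : I ⊆ Set.Ioi (0 : ℝ))
    (U : Set (Fin d → ℝ)) (hUopen : IsOpen U) (hUconn : IsConnected U)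
    (V : ℝ × (Fin d → ℝ) → ℝ) (hV : ContDiffOn ℝ 2 V (I ×ˢ U))
    (heq : ∀ A : Fin d, ∀ r ∈ I, ∀ x ∈ U,
      lineDeriv ℝ (fun p => lineDeriv ℝ V p ((0 : ℝ), Pi.single A 1)) (r, x)
          ((1 : ℝ), (0 : Fin d → ℝ)) =
        (1 / r) * lineDeriv ℝ V (r, x) ((0 : ℝ), Pi.single A 1)) :
    ∃ (β : ℝ → ℝ) (Ω : (Fin d → ℝ) → ℝ),
      ∀ r ∈ I, ∀ x ∈ U, V (r, x) = β r + r * Ω x := by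
  obtain ⟨r₀, hr₀⟩ := hIne
  obtain ⟨x₀, hx₀⟩ := hUconn.nonempty
  set S : Set (ℝ × (Fin d → ℝ)) := I ×ˢ U with hS_def
  have hSopen : IsOpen S := hIopen.prod hUopen
  -- differentiability of V on S
  have hVd : ∀ p ∈ S, DifferentiableAt ℝ V p := fun p hp =>
    ((hV.contDiffAt (hSopen.mem_nhds hp)).differentiableAt two_ne_zero)
  -- the partial derivative functions
  set g : Fin d → (ℝ × (Fin d → ℝ)) → ℝ :=
    fun A p => fderiv ℝ V p ((0 : ℝ), Pi.single A 1) with hg_def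
  -- g A is C¹ on S, hence differentiable at points of S
  have hgC1 : ∀ A, ContDiffOn ℝ 1 (g A) S := by
    intro A
    have h1 : ContDiffOn ℝ 1 (fderiv ℝ V) S := hV.fderiv_of_isOpen hSopen (by norm_num)
    exact (ContinuousLinearMap.apply ℝ ℝ
      (((0 : ℝ), Pi.single A 1) : ℝ × (Fin d → ℝ))).contDiff.comp_contDiffOn h1
  have hgd : ∀ A, ∀ p ∈ S, DifferentiableAt ℝ (g A) p := fun A p hp =>
    ((hgC1 A).contDiffAt (hSopen.mem_nhds hp)).differentiableAt one_ne_zero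
  -- rewrite the hypothesis in terms of fderiv
  have heq' : ∀ A : Fin d, ∀ r ∈ I, ∀ x ∈ U,
      fderiv ℝ (g A) (r, x) ((1 : ℝ), (0 : Fin d → ℝ)) = (1 / r) * g A (r, x) := by
    intro A r hr x hx
    have hp : ((r, x) : ℝ × (Fin d → ℝ)) ∈ S := ⟨hr, hx⟩
    have hev : (fun p => lineDeriv ℝ V p ((0 : ℝ), Pi.single A 1)) =ᶠ[nhds ((r, x) : ℝ × (Fin d → ℝ))] g A := by
      filter_upwards [hSopen.mem_nhds hp] with q hq
      exact (hVd q hq).lineDeriv_eq_fderiv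
    have h1 := hev.lineDeriv_eq (𝕜 := ℝ) (v := ((1 : ℝ), (0 : Fin d → ℝ)))
    have h2 := (hgd A (r, x) hp).lineDeriv_eq_fderiv (v := ((1 : ℝ), (0 : Fin d → ℝ)))
    have h3 := (hVd (r, x) hp).lineDeriv_eq_fderiv (v := (((0 : ℝ), Pi.single A 1) : ℝ × (Fin d → ℝ)))
    have h0 := heq A r hr x hx
    rw [h1, h2, h3] at h0
    exact h0
  -- key radial ODE : for fixed x, r ↦ g A (r,x) satisfies φ' = φ/r, hence φ(r)/r constant
  have key : ∀ A : Fin d, ∀ x ∈ U, ∀ r ∈ I,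
      g A (r, x) = (r / r₀) * g A (r₀, x) := by
    intro A x hx
    set φ : ℝ → ℝ := fun r => g A (r, x) with hφ_def
    have hφ' : ∀ r ∈ I, HasDerivAt φ ((1 / r) * φ r) r := by
      intro r hr
      have hp : ((r, x) : ℝ × (Fin d → ℝ)) ∈ S := ⟨hr, hx⟩
      have hmk : HasDerivAt (fun t : ℝ => ((t, x) : ℝ × (Fin d → ℝ)))
          (((1 : ℝ), (0 : Fin d → ℝ))) r := HasDerivAt.prodMk (hasDerivAt_id r) (hasDerivAt_const r x)
      have := ((hgd A (r, x) hp).hasFDerivAt).comp_hasDerivAt r hmk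
      rw [heq' A r hr x hx] at this
      exact this
    -- ψ := φ / id has derivative 0 on I
    have hψ : ∀ r ∈ I, HasDerivAt (fun r => φ r / r) 0 r := by
      intro r hr
      have hrpos : (0 : ℝ) < r := hIpos hr
      have := (hφ' r hr).div (hasDerivAt_id r) (ne_of_gt hrpos)
      exact this.congr_deriv (by change (1 / r * φ r * r - φ r * 1) / r ^ 2 = 0; field_simp; ring)
    have hconst := kid_aux_const_of_fderiv_zero hIopen hIconn
      (f := fun r => φ r / r) (fun r hr => by
        have h := (hψ r hr).hasFDerivAt
        rw [ContinuousLinearMap.toSpanSingleton_zero] at h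
        exact h) 
    intro r hr
    have h := hconst r hr r₀ hr₀
    have hrpos : (0 : ℝ) < r := hIpos hr
    have hr₀pos : (0 : ℝ) < r₀ := hIpos hr₀
    field_simp at h ⊢
    linarith [h]
  -- for each r ∈ I, x ↦ V(r,x) - (r/r₀) V(r₀,x) has zero derivative on U
  have hFzero : ∀ r ∈ I, ∀ x ∈ U,
      HasFDerivAt (fun y => V (r, y) - (r / r₀) * V (r₀, y))
        (0 : (Fin d → ℝ) →L[ℝ] ℝ) x := by
    intro r hr x hx
    have hp : ((r, x) : ℝ × (Fin d → ℝ)) ∈ S := ⟨hr, hx⟩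
    have hp₀ : ((r₀, x) : ℝ × (Fin d → ℝ)) ∈ S := ⟨hr₀, hx⟩
    have hmk : ∀ t : ℝ, HasFDerivAt (fun y : Fin d → ℝ => ((t, y) : ℝ × (Fin d → ℝ)))
        ((0 : (Fin d → ℝ) →L[ℝ] ℝ).prod (ContinuousLinearMap.id ℝ (Fin d → ℝ))) x :=
      fun t => HasFDerivAt.prodMk (hasFDerivAt_const t x) (hasFDerivAt_id x)
    set L : (Fin d → ℝ) →L[ℝ] (ℝ × (Fin d → ℝ)) :=
      (0 : (Fin d → ℝ) →L[ℝ] ℝ).prod (ContinuousLinearMap.id ℝ (Fin d → ℝ)) with hL_def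
    have h1 : HasFDerivAt (fun y => V (r, y)) ((fderiv ℝ V (r, x)).comp L) x :=
      ((hVd (r, x) hp).hasFDerivAt).comp x (hmk r)
    have h2 : HasFDerivAt (fun y => V (r₀, y)) ((fderiv ℝ V (r₀, x)).comp L) x :=
      ((hVd (r₀, x) hp₀).hasFDerivAt).comp x (hmk r₀)
    have h3 := h1.sub (h2.const_mul (r / r₀))
    have hM : (fderiv ℝ V (r, x)).comp L - (r / r₀) • (fderiv ℝ V (r₀, x)).comp L
        = (0 : (Fin d → ℝ) →L[ℝ] ℝ) := by
      apply ContinuousLinearMap.coe_injective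
      apply Module.Basis.ext (Pi.basisFun ℝ (Fin d))
      intro A
      simp only [Pi.basisFun_apply, ContinuousLinearMap.coe_sub', ContinuousLinearMap.coe_smul',
        Pi.sub_apply, Pi.smul_apply, ContinuousLinearMap.coe_coe,
        ContinuousLinearMap.comp_apply, ContinuousLinearMap.zero_apply]
      have hLA : L (Pi.single A 1) = (((0 : ℝ), Pi.single A 1) : ℝ × (Fin d → ℝ)) := by
        simp [hL_def]
      rw [hLA]
      have := key A x hx r hr
      simp only [hg_def] at this
      rw [this]
      simp [smul_eq_mul]
    rw [hM] at h3
    exact h3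
  -- conclude
  refine ⟨fun r => V (r, x₀) - (r / r₀) * V (r₀, x₀), fun x => V (r₀, x) / r₀, ?_⟩
  intro r hr x hx
  have hr₀pos : (0 : ℝ) < r₀ := hIpos hr₀
  have hconst := kid_aux_const_of_fderiv_zero hUopen hUconn.isPreconnected
    (hFzero r hr) x hx x₀ hx₀
  have : V (r, x) = V (r, x₀) - (r / r₀) * V (r₀, x₀) + (r / r₀) * V (r₀, x) := by
    linarith [hconst]
  rw [this]
  field_simp
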